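/- The map L : Y → X sending y to the unique minimizer of J on {x : Ax = y} is linear: L(αa + βb) = αL(a) + βL(b) for all a, b ∈ Y and α, β ∈ ℝ. -/

import Mathlib

/-- Weak convergence of a sequence in a normed space. -/
def WeakConv {X : Type*} [NormedAddCommGroup X] [NormedSpace ℝ X]
    (u : ℕ → X) (x : X) : Prop :=
  ∀ f : X →L[ℝ] ℝ, Filter.Tendsto (fun n => f (u n)) Filter.atTop (nhds (f x))

/-- the map `L` sending `y` to the unique minimizer of `J` on
`{x : A x = y}` is linear. -/
theorem minimizer_map_linear
    {X Y : Type*} [NormedAddCommGroup X] [NormedSpace ℝ X]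
    [NormedAddCommGroup Y] [NormedSpace ℝ Y]
    (Jt : X →ₗ[ℝ] X →ₗ[ℝ] ℝ)
    (hsymm : ∀ x y, Jt x y = Jt y x)
    (hbdd : ∃ M : ℝ, ∀ x y, |Jt x y| ≤ M * ‖x‖ * ‖y‖)
    (hweak : ∀ (y : X) (u : ℕ → X) (x : X), WeakConv u x →
      Filter.Tendsto (fun n => Jt (u n) y) Filter.atTop (nhds (Jt x y)))
    (J : X → ℝ) (hJ : ∀ x, J x = Jt x x)
    (hpos : ∀ x, 0 ≤ J x)
    (hzero : ∀ x, J x = 0 → x = 0)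
    (hcompact : ∀ c > (0:ℝ), ∀ u : ℕ → X, (∀ n, J (u n) ≤ c) →
      ∃ (x : X) (φ : ℕ → ℕ), StrictMono φ ∧ J x ≤ c ∧ WeakConv (u ∘ φ) x)
    (A : X →L[ℝ] Y) (hA : Function.Surjective A)
    (L : Y → X)
    (hLmin : ∀ y : Y, A (L y) = y ∧ ∀ x : X, A x = y → J (L y) ≤ J x)
    (hLuniq : ∀ (y : Y) (x : X), A x = y → (∀ x' : X, A x' = y → J x ≤ J x') → x = L y) :
    ∀ (a b : Y) (α β : ℝ), L (α • a + β • b) = α • L a + β • L b := by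
  -- orthogonality: for z in ker A, Jt (L y) z = 0
  have orth : ∀ (y : Y) (z : X), A z = 0 → Jt (L y) z = 0 := by
    intro y z hz
    set c := Jt (L y) z with hc
    set q := J z with hqdef
    have hq : 0 ≤ q := hpos z
    have key : ∀ t : ℝ, 0 ≤ 2 * t * c + t ^ 2 * q := by
      intro t
      have hAx : A (L y + t • z) = y := by
        simp [map_add, map_smul, hz, (hLmin y).1]
      have hle := (hLmin y).2 _ hAx
      have hexp : J (L y + t • z) = J (L y) + 2 * t * c + t ^ 2 * q := by
        rw [hJ, hJ, hqdef, hJ]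
        simp only [map_add, map_smul, LinearMap.add_apply, LinearMap.smul_apply,
          smul_eq_mul]
        rw [hsymm z (L y)]
        ring
      rw [hexp] at hle
      linarith
    rcases hq.eq_or_lt with hq0 | hq0
    · have h1 := key (-c)
      nlinarith [sq_nonneg c]
    · have h1 := key (-(c / q))
      have hne : q ≠ 0 := ne_of_gt hq0
      have h2 : 0 ≤ -(c ^ 2 / q) := by
        have : 2 * -(c / q) * c + (-(c / q)) ^ 2 * q = -(c ^ 2 / q) := by
          field_simp; ring
        linarith [this ▸ h1]
      have h3 : c ^ 2 / q ≤ 0 := by linarith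
      have h4 : 0 ≤ c ^ 2 / q := div_nonneg (sq_nonneg c) hq
      have := le_antisymm h3 h4
      field_simp at this
      exact (pow_eq_zero_iff two_ne_zero).mp (by rw [this, mul_zero])
  intro a b α β
  set w := α • L a + β • L b with hw
  have hAw : A w = α • a + β • b := by
    simp [hw, map_add, map_smul, (hLmin a).1, (hLmin b).1]
  refine (hLuniq _ w hAw ?_).symm
  intro x hx
  set z := x - w with hzdef
  have hAz : A z = 0 := by
    rw [hzdef, map_sub, hx, hAw, sub_self]
  have hwz : Jt w z = 0 := by
    simp [hw, map_add, map_smul, orth a z hAz, orth b z hAz]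
  have hxw : x = w + z := by rw [hzdef]; abel
  have hexp : J x = J w + 2 * Jt w z + J z := by
    rw [hxw, hJ, hJ, hJ]
    simp only [map_add, LinearMap.add_apply]
    rw [hsymm z w]
    ring
  have := hpos z
  rw [hexp, hwz]
  linarith
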